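/- For all real λ ≥ 0 and μ ≥ 0, the total variation distance between the Poisson distributions with means λ and μ satisfies d_TV(Poi(λ), Poi(μ)) = (1/2) Σ_{k ∈ ℕ} |Poi(λ)(k) − Poi(μ)(k)| ≤ |λ − μ|. -/

import Mathlib

set_option maxHeartbeats 1000000

/-- The Poisson probability mass function on `ℕ` with mean `λ`:
`k ↦ e^(-λ) λ^k / k!`. -/
noncomputable def poissonPMFReal' (l : ℝ) (k : ℕ) : ℝ :=
  Real.exp (-l) * l ^ k / (Nat.factorial k : ℝ)

lemma poisson_nonneg {t : ℝ} (ht : 0 ≤ t) (k : ℕ) : 0 ≤ poissonPMFReal' t k := by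
  unfold poissonPMFReal'
  positivity

lemma poisson_tsum {t : ℝ} : ∑' k : ℕ, poissonPMFReal' t k = 1 := by
  unfold poissonPMFReal'
  rw [tsum_eq_tsum_of_hasSum_iff_hasSum (fun {a} => Iff.rfl)]
  have h : ∑' k : ℕ, Real.exp (-t) * (t ^ k / (Nat.factorial k : ℝ)) = 1 := by
    rw [tsum_mul_left]
    have : ∑' k : ℕ, t ^ k / (Nat.factorial k : ℝ) = Real.exp t := by
      rw [Real.exp_eq_exp_ℝ, NormedSpace.exp_eq_tsum_div]
    rw [this, ← Real.exp_add]
    simp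
  rw [← h]
  congr 1
  ext k
  ring

lemma poisson_sum_range_le {t : ℝ} (ht : 0 ≤ t) (n : ℕ) :
    ∑ k ∈ Finset.range n, poissonPMFReal' t k ≤ 1 := by
  have hs : Summable (fun k : ℕ => poissonPMFReal' t k) := by
    unfold poissonPMFReal'
    simpa [mul_div_assoc] using (Real.summable_pow_div_factorial t).mul_left (Real.exp (-t))
  calc ∑ k ∈ Finset.range n, poissonPMFReal' t k
      ≤ ∑' k : ℕ, poissonPMFReal' t k := hs.sum_le_tsum _ (fun k _ => poisson_nonneg ht k)
    _ = 1 := poisson_tsum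

/-- The time-derivative of the Poisson pmf. -/
noncomputable def poissonDeriv (k : ℕ) (t : ℝ) : ℝ :=
  (Real.exp (-t) * (k * t ^ (k - 1)) - Real.exp (-t) * t ^ k) / (Nat.factorial k : ℝ)

lemma poisson_hasDerivAt (k : ℕ) (t : ℝ) :
    HasDerivAt (fun t => poissonPMFReal' t k) (poissonDeriv k t) t := by
  have h1 : HasDerivAt (fun t : ℝ => Real.exp (-t)) (Real.exp (-t) * (-1)) t :=
    (hasDerivAt_neg t).exp
  have h2 : HasDerivAt (fun t : ℝ => t ^ k) ((k : ℝ) * t ^ (k - 1)) t := hasDerivAt_pow k t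
  have h := (h1.mul h2).div_const (Nat.factorial k : ℝ)
  unfold poissonPMFReal' poissonDeriv
  refine h.congr_deriv ?_
  ring

/-- The "shifted" pmf: equals `poissonPMFReal' t (k-1)` for `k ≥ 1`, and `0` for `k = 0`. -/
noncomputable def poissonShift (k : ℕ) (t : ℝ) : ℝ :=
  Real.exp (-t) * ((k : ℝ) * t ^ (k - 1)) / (Nat.factorial k : ℝ)

lemma poissonShift_zero (t : ℝ) : poissonShift 0 t = 0 := by simp [poissonShift]

lemma poissonShift_succ (k : ℕ) (t : ℝ) :
    poissonShift (k + 1) t = poissonPMFReal' t k := by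
  unfold poissonShift poissonPMFReal'
  rw [Nat.factorial_succ]
  push_cast
  have h1 : (Nat.factorial k : ℝ) ≠ 0 := Nat.cast_ne_zero.mpr k.factorial_ne_zero
  have h2 : ((k : ℝ) + 1) ≠ 0 := by positivity
  field_simp

lemma poissonShift_nonneg {t : ℝ} (ht : 0 ≤ t) (k : ℕ) : 0 ≤ poissonShift k t := by
  unfold poissonShift
  positivity

lemma poissonDeriv_abs_le {t : ℝ} (ht : 0 ≤ t) (k : ℕ) :
    |poissonDeriv k t| ≤ poissonPMFReal' t k + poissonShift k t := by
  unfold poissonDeriv poissonPMFReal' poissonShift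
  rw [abs_div, abs_of_nonneg (by positivity : (0:ℝ) ≤ (Nat.factorial k : ℝ))]
  rw [← add_div]
  apply div_le_div_of_nonneg_right _ (by positivity)
  · calc |Real.exp (-t) * (↑k * t ^ (k - 1)) - Real.exp (-t) * t ^ k|
        ≤ |Real.exp (-t) * (↑k * t ^ (k - 1))| + |Real.exp (-t) * t ^ k| := abs_sub _ _
      _ = Real.exp (-t) * (↑k * t ^ (k - 1)) + Real.exp (-t) * t ^ k := by
          rw [abs_of_nonneg (by positivity), abs_of_nonneg (by positivity)]
      _ = Real.exp (-t) * t ^ k + Real.exp (-t) * (↑k * t ^ (k - 1)) := by ring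

lemma poisson_cont (k : ℕ) : Continuous (fun t : ℝ => poissonPMFReal' t k) := by
  unfold poissonPMFReal'
  fun_prop

lemma poissonShift_cont (k : ℕ) : Continuous (fun t : ℝ => poissonShift k t) := by
  unfold poissonShift
  fun_prop

lemma poissonDeriv_cont (k : ℕ) : Continuous (fun t : ℝ => poissonDeriv k t) := by
  unfold poissonDeriv
  fun_prop

/-- Key estimate in the ordered case. -/
lemma poisson_tv_key {l m : ℝ} (hl : 0 ≤ l) (hlm : l ≤ m) :
    ∑' k : ℕ, |poissonPMFReal' l k - poissonPMFReal' m k| ≤ 2 * (m - l) := by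
  have hm : 0 ≤ m := hl.trans hlm
  -- bound on partial sums
  apply Real.tsum_le_of_sum_range_le (fun k => abs_nonneg _)
  intro n
  have hstep : ∀ k : ℕ, |poissonPMFReal' l k - poissonPMFReal' m k|
      ≤ ∫ t in l..m, (poissonPMFReal' t k + poissonShift k t) := by
    intro k
    have hftc : ∫ t in l..m, poissonDeriv k t
        = poissonPMFReal' m k - poissonPMFReal' l k :=
      intervalIntegral.integral_eq_sub_of_hasDerivAt
        (fun t _ => poisson_hasDerivAt k t)
        ((poissonDeriv_cont k).intervalIntegrable l m)
    have h1 : |poissonPMFReal' l k - poissonPMFReal' m k|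
        = |∫ t in l..m, poissonDeriv k t| := by
      rw [hftc, abs_sub_comm]
    rw [h1]
    calc |∫ t in l..m, poissonDeriv k t|
        ≤ ∫ t in l..m, |poissonDeriv k t| :=
          intervalIntegral.abs_integral_le_integral_abs hlm
      _ ≤ ∫ t in l..m, (poissonPMFReal' t k + poissonShift k t) := by
          apply intervalIntegral.integral_mono_on hlm
            ((poissonDeriv_cont k).abs.intervalIntegrable l m)
            (((poisson_cont k).add (poissonShift_cont k)).intervalIntegrable l m)
          intro t ht
          exact poissonDeriv_abs_le (hl.trans ht.1) k
  calc ∑ k ∈ Finset.range n, |poissonPMFReal' l k - poissonPMFReal' m k|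
      ≤ ∑ k ∈ Finset.range n, ∫ t in l..m, (poissonPMFReal' t k + poissonShift k t) :=
        Finset.sum_le_sum (fun k _ => hstep k)
    _ = ∫ t in l..m, ∑ k ∈ Finset.range n, (poissonPMFReal' t k + poissonShift k t) := by
        rw [intervalIntegral.integral_finset_sum]
        intro k _
        exact ((poisson_cont k).add (poissonShift_cont k)).intervalIntegrable l m
    _ ≤ ∫ t in l..m, (2 : ℝ) := by
        have hcont : Continuous
            (fun t : ℝ => ∑ k ∈ Finset.range n, (poissonPMFReal' t k + poissonShift k t)) :=
          continuous_finset_sum _ (fun k _ => (poisson_cont k).add (poissonShift_cont k))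
        have hbd : ∀ t ∈ Set.Icc l m,
            (∑ k ∈ Finset.range n, (poissonPMFReal' t k + poissonShift k t)) ≤ (2 : ℝ) := ?_
        · exact intervalIntegral.integral_mono_on hlm (hcont.intervalIntegrable l m)
            intervalIntegrable_const hbd
        intro t ht
        have ht0 : 0 ≤ t := hl.trans ht.1
        rw [Finset.sum_add_distrib]
        have hA : ∑ k ∈ Finset.range n, poissonPMFReal' t k ≤ 1 :=
          poisson_sum_range_le ht0 n
        have hB : ∑ k ∈ Finset.range n, poissonShift k t ≤ 1 := by
          cases n with
          | zero => simp
          | succ n =>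
            rw [Finset.sum_range_succ' (fun k => poissonShift k t) n]
            simp only [poissonShift_zero, add_zero]
            calc ∑ i ∈ Finset.range n, poissonShift (i + 1) t
                = ∑ i ∈ Finset.range n, poissonPMFReal' t i := by
                  exact Finset.sum_congr rfl (fun i _ => poissonShift_succ i t)
              _ ≤ 1 := poisson_sum_range_le ht0 n
        linarith
    _ = 2 * (m - l) := by
        rw [intervalIntegral.integral_const]
        simp [mul_comm]

/-- For `λ, μ ≥ 0`, the total variation distance between the Poisson
distributions with means `λ` and `μ` is at most `|λ - μ|`. -/
theorem totalVariation_poisson_poisson_le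
    (l m : ℝ) (hl : 0 ≤ l) (hm : 0 ≤ m) :
    (1 / 2) * ∑' k : ℕ, |poissonPMFReal' l k - poissonPMFReal' m k| ≤ |l - m| := by
  rcases le_total l m with h | h
  · have := poisson_tv_key hl h
    rw [abs_of_nonpos (by linarith)]
    linarith
  · have := poisson_tv_key hm h
    rw [abs_of_nonneg (by linarith)]
    have heq : ∑' k : ℕ, |poissonPMFReal' l k - poissonPMFReal' m k|
        = ∑' k : ℕ, |poissonPMFReal' m k - poissonPMFReal' l k| := by
      congr 1; ext k; rw [abs_sub_comm]
    rw [heq]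
    linarith
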